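/- Let A, B be 4×2 complex matrices and V₁, V₂, V₃ be 1×4 complex row vectors. For g ∈ SL(2, ℂ) and G ∈ SL(4, ℂ), consider the transformed data A' = G A g^{-1}, B' = G B g^{-1}, Vᵢ' = Vᵢ G^{-1}. Then the four quantities det[A | B] (the determinant of the 4×4 matrix whose first two columns are those of A and last two are those of B), det(of the 2×2 matrix with rows V₁B and V₂A), det(of the 2×2 matrix with rows V₁B and V₃A), and det(of the 2×2 matrix with rows V₂A and V₃B) are unchanged: each takes the same value on (A', B', V₁', V₂', V₃') as on (A, B, V₁, V₂, V₃). -/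

import Mathlib

open Matrix

/-- The determinant of the `4×4` matrix `[A | B]` whose first two columns are those of `A`
and whose last two columns are those of `B`. -/
noncomputable def detAB (A B : Matrix (Fin 4) (Fin 2) ℂ) : ℂ :=
  ((Matrix.fromCols A B).submatrix id (finSumFinEquiv.symm : Fin (2 + 2) ≃ _)).det

/-- The determinant of the `2×2` matrix whose rows are the `1×4`-by-`4×2` products
`r` and `s` (regarded as row vectors of length 2). -/
noncomputable def detRows (r s : Matrix (Fin 1) (Fin 2) ℂ) : ℂ :=
  (Matrix.of ![r 0, s 0]).det

lemma detRows_mul_right (r s : Matrix (Fin 1) (Fin 2) ℂ) (M : Matrix (Fin 2) (Fin 2) ℂ) :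
    detRows (r * M) (s * M) = detRows r s * M.det := by
  have h : (Matrix.of ![(r * M) 0, (s * M) 0]) = (Matrix.of ![r 0, s 0]) * M := by
    ext i j
    fin_cases i <;> simp [Matrix.mul_apply]
  rw [detRows, h, Matrix.det_mul]
  rfl

lemma detAB_action (A B : Matrix (Fin 4) (Fin 2) ℂ)
    (G : Matrix (Fin 4) (Fin 4) ℂ) (h : Matrix (Fin 2) (Fin 2) ℂ) :
    detAB (G * A * h) (G * B * h) = G.det * detAB A B * h.det ^ 2 := by
  set f : Fin (2 + 2) ≃ (Fin 2 ⊕ Fin 2) := finSumFinEquiv.symm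
  set C : Matrix (Fin 4) (Fin 2 ⊕ Fin 2) ℂ := Matrix.fromCols A B
  set D : Matrix (Fin 2 ⊕ Fin 2) (Fin 2 ⊕ Fin 2) ℂ := Matrix.fromBlocks h 0 0 h
  have h1 : Matrix.fromCols (G * A * h) (G * B * h) = G * C * D := by
    ext i j
    cases j <;> simp [C, D, Matrix.fromCols, Matrix.fromBlocks, Matrix.mul_apply,
      Finset.sum_mul, Finset.mul_sum, mul_assoc]
  have h2 : (G * C * D).submatrix id f =
      ((G * C).submatrix id f) * (D.submatrix f f) := by
    rw [Matrix.submatrix_mul_equiv (G * C) D id f f]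
  have h3 : (G * C).submatrix id f = G * (C.submatrix id f) := by
    ext i j
    simp [Matrix.mul_apply]
  have hD : (D.submatrix f f).det = h.det * h.det := by
    rw [Matrix.det_submatrix_equiv_self, Matrix.det_fromBlocks_zero₂₁]
  rw [detAB, h1, h2, h3, Matrix.det_mul, Matrix.det_mul, hD, detAB]
  ring

/-- The four quantities `det[A|B]`, `det(V₁B; V₂A)`, `det(V₁B; V₃A)`,
`det(V₂A; V₃B)` of (4.26) are invariant under the action
`(g, G)·(A, B, Vᵢ) = (GAg⁻¹, GBg⁻¹, VᵢG⁻¹)` of `SL(2,ℂ) × SL(4,ℂ)`. -/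
theorem framed_parabolic_invariants
    (A B : Matrix (Fin 4) (Fin 2) ℂ)
    (V₁ V₂ V₃ : Matrix (Fin 1) (Fin 4) ℂ)
    (g : Matrix.SpecialLinearGroup (Fin 2) ℂ)
    (G : Matrix.SpecialLinearGroup (Fin 4) ℂ)
    (A' B' : Matrix (Fin 4) (Fin 2) ℂ)
    (V₁' V₂' V₃' : Matrix (Fin 1) (Fin 4) ℂ)
    (hA : A' = (G : Matrix (Fin 4) (Fin 4) ℂ) * A * ((g⁻¹ : Matrix.SpecialLinearGroup (Fin 2) ℂ) : Matrix (Fin 2) (Fin 2) ℂ))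
    (hB : B' = (G : Matrix (Fin 4) (Fin 4) ℂ) * B * ((g⁻¹ : Matrix.SpecialLinearGroup (Fin 2) ℂ) : Matrix (Fin 2) (Fin 2) ℂ))
    (hV₁ : V₁' = V₁ * ((G⁻¹ : Matrix.SpecialLinearGroup (Fin 4) ℂ) : Matrix (Fin 4) (Fin 4) ℂ))
    (hV₂ : V₂' = V₂ * ((G⁻¹ : Matrix.SpecialLinearGroup (Fin 4) ℂ) : Matrix (Fin 4) (Fin 4) ℂ))
    (hV₃ : V₃' = V₃ * ((G⁻¹ : Matrix.SpecialLinearGroup (Fin 4) ℂ) : Matrix (Fin 4) (Fin 4) ℂ)) :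
    detAB A' B' = detAB A B ∧
    detRows (V₁' * B') (V₂' * A') = detRows (V₁ * B) (V₂ * A) ∧
    detRows (V₁' * B') (V₃' * A') = detRows (V₁ * B) (V₃ * A) ∧
    detRows (V₂' * A') (V₃' * B') = detRows (V₂ * A) (V₃ * B) := by
  have hGinv : ((G⁻¹ : Matrix.SpecialLinearGroup (Fin 4) ℂ) : Matrix (Fin 4) (Fin 4) ℂ) *
      (G : Matrix (Fin 4) (Fin 4) ℂ) = 1 := by
    rw [← Matrix.SpecialLinearGroup.coe_mul, inv_mul_cancel]
    rfl
  have hdetg : ((g⁻¹ : Matrix.SpecialLinearGroup (Fin 2) ℂ) : Matrix (Fin 2) (Fin 2) ℂ).det = 1 :=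
    Matrix.SpecialLinearGroup.det_coe g⁻¹
  have hdetG : ((G : Matrix (Fin 4) (Fin 4) ℂ)).det = 1 :=
    Matrix.SpecialLinearGroup.det_coe G
  set h := ((g⁻¹ : Matrix.SpecialLinearGroup (Fin 2) ℂ) : Matrix (Fin 2) (Fin 2) ℂ)
  have key : ∀ (V : Matrix (Fin 1) (Fin 4) ℂ) (X : Matrix (Fin 4) (Fin 2) ℂ),
      (V * ((G⁻¹ : Matrix.SpecialLinearGroup (Fin 4) ℂ) : Matrix (Fin 4) (Fin 4) ℂ)) *
        ((G : Matrix (Fin 4) (Fin 4) ℂ) * X * h) = (V * X) * h := by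
    intro V X
    calc (V * ((G⁻¹ : Matrix.SpecialLinearGroup (Fin 4) ℂ) : Matrix (Fin 4) (Fin 4) ℂ)) *
        ((G : Matrix (Fin 4) (Fin 4) ℂ) * X * h)
        = V * (((G⁻¹ : Matrix.SpecialLinearGroup (Fin 4) ℂ) : Matrix (Fin 4) (Fin 4) ℂ) *
          (G : Matrix (Fin 4) (Fin 4) ℂ)) * X * h := by
          simp only [Matrix.mul_assoc]
      _ = (V * X) * h := by rw [hGinv, Matrix.mul_one, Matrix.mul_assoc]
  subst hA hB hV₁ hV₂ hV₃
  refine ⟨?_, ?_, ?_, ?_⟩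
  · rw [detAB_action, hdetg, hdetG]; ring
  · rw [key, key, detRows_mul_right, hdetg, mul_one]
  · rw [key, key, detRows_mul_right, hdetg, mul_one]
  · rw [key, key, detRows_mul_right, hdetg, mul_one]
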